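/- Let (𝔤, ω) be a symplectic Lie algebra, q(x) := ω(x,·), r := q⁻¹, and let 𝒟(𝔤) := 𝔤 × 𝔤* be the double Lie algebra with bracket [(x,α),(y,β)] := ([x,y] + ad*_α y - ad*_β x, [α,β]_q + ad*_x β - ad*_y α). Then the endomorphism J of 𝒟(𝔤) defined by J(x,α) := (-r(α), q(x)) satisfies J ∘ J = -id, and its Nijenhuis tensor N_J(v₁,v₂) := [Jv₁, Jv₂] - [v₁,v₂] - J[v₁, Jv₂] - J[Jv₁, v₂] vanishes for all v₁, v₂ ∈ 𝒟(𝔤). -/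
import Mathlib


/-- The coadjoint action of `x : L` on the dual: `⟨coad x α, y⟩ = -⟨α, [x,y]⟩`. -/
noncomputable def coad {L : Type*} [LieRing L] [LieAlgebra ℝ L]
    (x : L) (α : Module.Dual ℝ L) : Module.Dual ℝ L :=
  -(α ∘ₗ (LieAlgebra.ad ℝ L x))

/-- The bracket of the double Lie algebra `𝒟(𝔤) = 𝔤 × 𝔤*` of a symplectic Lie algebra:
`[(x,α),(y,β)] = ([x,y] + ad*_α y - ad*_β x, [α,β]_q + ad*_x β - ad*_y α)`, where
`[α,β]_q = q [r α, r β]` and `cstar` is the coadjoint action of `𝔤*` on `𝔤`. -/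
noncomputable def dbrq {L : Type*} [LieRing L] [LieAlgebra ℝ L]
    (ω : L →ₗ[ℝ] Module.Dual ℝ L) (r : Module.Dual ℝ L →ₗ[ℝ] L)
    (cstar : Module.Dual ℝ L → L → L)
    (u v : L × Module.Dual ℝ L) : L × Module.Dual ℝ L :=
  (⁅u.1, v.1⁆ + cstar u.2 v.1 - cstar v.2 u.1,
    ω ⁅r u.2, r v.2⁆ + coad u.1 v.2 - coad v.1 u.2)

/-- The almost complex structure `J(x,α) = (-q⁻¹ α, q x)` on `𝒟(𝔤)`. -/
noncomputable def Jcx {L : Type*} [LieRing L] [LieAlgebra ℝ L]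
    (ω : L →ₗ[ℝ] Module.Dual ℝ L) (r : Module.Dual ℝ L →ₗ[ℝ] L)
    (v : L × Module.Dual ℝ L) : L × Module.Dual ℝ L :=
  (-(r v.2), ω v.1)

/-- for a symplectic Lie algebra `(𝔤, ω)`, the endomorphism
`J(x,α) = (-q⁻¹ α, q x)` of the double `𝒟(𝔤)` satisfies `J ∘ J = -id` and its
Nijenhuis tensor vanishes. -/
theorem stmt17 {L : Type*} [LieRing L] [LieAlgebra ℝ L] [FiniteDimensional ℝ L]
    (ω : L →ₗ[ℝ] Module.Dual ℝ L)
    (hskew : ∀ x y : L, ω x y = - ω y x)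
    (hclosed : ∀ x y z : L, ω ⁅x, y⁆ z + ω ⁅y, z⁆ x + ω ⁅z, x⁆ y = 0)
    (r : Module.Dual ℝ L →ₗ[ℝ] L)
    (hr1 : ∀ α : Module.Dual ℝ L, ω (r α) = α)
    (hr2 : ∀ x : L, r (ω x) = x)
    (cstar : Module.Dual ℝ L → L → L)
    (hcstar : ∀ (α : Module.Dual ℝ L) (x : L) (β : Module.Dual ℝ L),
      β (cstar α x) = -((ω ⁅r α, r β⁆) x)) :
    (∀ v : L × Module.Dual ℝ L, Jcx ω r (Jcx ω r v) = -v) ∧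
    (∀ v₁ v₂ : L × Module.Dual ℝ L,
      dbrq ω r cstar (Jcx ω r v₁) (Jcx ω r v₂) - dbrq ω r cstar v₁ v₂
        - Jcx ω r (dbrq ω r cstar v₁ (Jcx ω r v₂))
        - Jcx ω r (dbrq ω r cstar (Jcx ω r v₁) v₂) = 0) := by
  have hc2 : ∀ (α : Module.Dual ℝ L) (x w : L),
      ω (cstar α x) w = ω ⁅r α, w⁆ x := by
    intro α x w
    have h := hcstar α x (ω w)
    rw [hr2] at h
    rw [hskew (cstar α x) w, h, neg_neg]
  have hcl : ∀ p q s : L, ω ⁅p, q⁆ s + ω ⁅q, s⁆ p - ω ⁅p, s⁆ q = 0 := by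
    intro p q s
    have h := hclosed p q s
    have h2 : ω ⁅s, p⁆ q = -ω ⁅p, s⁆ q := by
      rw [← lie_skew s p, map_neg, LinearMap.neg_apply]
    linarith
  have hzero : ∀ z : L, ω z = 0 → z = 0 := by
    intro z h
    rw [← hr2 z, h, map_zero]
  constructor
  · intro v
    have h1 : (Jcx ω r (Jcx ω r v)).1 = (-v).1 := by
      simp [Jcx, hr2]
    have h2 : (Jcx ω r (Jcx ω r v)).2 = (-v).2 := by
      simp [Jcx, hr1]
    exact Prod.ext h1 h2
  · intro v₁ v₂
    obtain ⟨x, α⟩ := v₁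
    obtain ⟨y, β⟩ := v₂
    obtain ⟨a, rfl⟩ : ∃ a, α = ω a := ⟨r α, (hr1 α).symm⟩
    obtain ⟨b, rfl⟩ : ∃ b, β = ω b := ⟨r β, (hr1 β).symm⟩
    refine Prod.ext ?_ ?_
    · show _ = (0 : L)
      apply hzero
      ext w
      simp only [dbrq, Jcx, coad, Prod.fst_sub, Prod.snd_sub, hr2, map_add, map_sub, map_neg,
        LinearMap.add_apply, LinearMap.sub_apply, LinearMap.neg_apply, LinearMap.comp_apply,
        LieAlgebra.ad_apply, LinearMap.zero_apply, Prod.fst_zero, hr1, hc2,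
        neg_lie, lie_neg, neg_neg]
      linarith [hcl x y w, hcl a b w, hcl x b w, hcl a y w,
        hskew y ⁅x, w⁆, hskew a ⁅b, w⁆, hskew b ⁅a, w⁆, hskew x ⁅y, w⁆,
        hskew y ⁅a, w⁆, hskew x ⁅b, w⁆, hskew b ⁅x, w⁆, hskew a ⁅y, w⁆]
    · show _ = (0 : Module.Dual ℝ L)
      ext w
      simp only [dbrq, Jcx, coad, Prod.fst_sub, Prod.snd_sub, hr2, map_add, map_sub, map_neg,
        LinearMap.add_apply, LinearMap.sub_apply, LinearMap.neg_apply, LinearMap.comp_apply,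
        LieAlgebra.ad_apply, LinearMap.zero_apply, Prod.snd_zero, hr1, hc2,
        neg_lie, lie_neg, neg_neg]
      linarith [hcl x y w, hcl a b w, hcl x b w, hcl a y w,
        hskew y ⁅x, w⁆, hskew a ⁅b, w⁆, hskew b ⁅a, w⁆, hskew x ⁅y, w⁆,
        hskew y ⁅a, w⁆, hskew x ⁅b, w⁆, hskew b ⁅x, w⁆, hskew a ⁅y, w⁆]
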